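/- arXiv:2306.12275 — 2 statements merged into one kernel-verified Lean document; each statement's English description precedes it below -/
import Mathlib

section
/- Let Y_1, Y_2, ... be i.i.d. nonnegative strictly α-stable random variables (with Laplace transform e^{-λ^α}, 0 < α < 1), let Z_0 = 0 and Z_n = Y_1 + ... + Y_n, and let P be an N-valued random variable independent of (Y_n). Let Ȳ ∼ ν be independent of (Y_n) and P, where ν is the law of Y_1. Define Ỹ = P^{-1/α} Z_P on {P ≠ 0} and Ỹ = Ȳ on {P = 0}. Then Z_P = P^{1/α} Ỹ, Ỹ has law ν, and Ỹ is independent of P. -/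
open MeasureTheory ProbabilityTheory Real BoundedContinuousFunction

/-- Two probability measures on `ℝ` supported in `[0,1]` with the same moments are equal. -/
lemma ext_of_moments_aux (μ ν : Measure ℝ) [IsProbabilityMeasure μ] [IsProbabilityMeasure ν]
    (hμ : ∀ᵐ x ∂μ, x ∈ Set.Icc (0:ℝ) 1) (hν : ∀ᵐ x ∂ν, x ∈ Set.Icc (0:ℝ) 1)
    (h : ∀ n : ℕ, ∫ x, x ^ n ∂μ = ∫ x, x ^ n ∂ν) : μ = ν := by
  have int_pow : ∀ (κ : Measure ℝ) (_ : IsProbabilityMeasure κ),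
      (∀ᵐ x ∂κ, x ∈ Set.Icc (0:ℝ) 1) → ∀ n : ℕ, Integrable (fun x : ℝ => x ^ n) κ := by
    intro κ hκi hκ n
    refine Integrable.mono' (integrable_const 1)
      ((measurable_id.pow_const n).aestronglyMeasurable) ?_
    filter_upwards [hκ] with x hx
    rw [Real.norm_eq_abs, abs_pow, abs_of_nonneg hx.1]
    exact pow_le_one₀ hx.1 hx.2
  have int_poly : ∀ (κ : Measure ℝ) (_ : IsProbabilityMeasure κ),
      (∀ᵐ x ∂κ, x ∈ Set.Icc (0:ℝ) 1) → ∀ p : Polynomial ℝ,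
      Integrable (fun x : ℝ => p.eval x) κ := by
    intro κ hκi hκ p
    have hrw : (fun x : ℝ => p.eval x)
        = fun x => ∑ i ∈ Finset.range (p.natDegree + 1), p.coeff i * x ^ i := by
      funext x; exact p.eval_eq_sum_range x
    rw [hrw]
    exact integrable_finset_sum _ fun i _ => (int_pow κ hκi hκ i).const_mul _
  have hpoly : ∀ p : Polynomial ℝ, ∫ x, p.eval x ∂μ = ∫ x, p.eval x ∂ν := by
    intro p
    simp_rw [Polynomial.eval_eq_sum_range]
    rw [integral_finset_sum _ fun i _ => (int_pow μ ‹_› hμ i).const_mul _,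
        integral_finset_sum _ fun i _ => (int_pow ν ‹_› hν i).const_mul _]
    refine Finset.sum_congr rfl fun i _ => ?_
    rw [integral_const_mul, integral_const_mul, h i]
  have key : ∀ g : ℝ →ᵇ ℝ, ∫ x, g x ∂μ = ∫ x, g x ∂ν := by
    intro g
    have main : ∀ ε : ℝ, 0 < ε → |∫ x, g x ∂μ - ∫ x, g x ∂ν| ≤ 2 * ε := by
      intro ε hε
      obtain ⟨p, hp⟩ := exists_polynomial_near_of_continuousOn 0 1 g
        g.continuous.continuousOn ε hε
      have hdiff : ∀ (κ : Measure ℝ) (_ : IsProbabilityMeasure κ),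
          (∀ᵐ x ∂κ, x ∈ Set.Icc (0:ℝ) 1) →
          |∫ x, g x ∂κ - ∫ x, p.eval x ∂κ| ≤ ε := by
        intro κ hκi hκ
        rw [← integral_sub (g.integrable κ) (int_poly κ hκi hκ p)]
        have hb : ∀ᵐ x ∂κ, ‖g x - p.eval x‖ ≤ ε := by
          filter_upwards [hκ] with x hx
          rw [Real.norm_eq_abs, abs_sub_comm]
          exact (hp x hx).le
        have := norm_integral_le_of_norm_le_const (μ := κ)
          (f := fun x => g x - p.eval x) hb
        simpa [measure_univ] using this
      calc |∫ x, g x ∂μ - ∫ x, g x ∂ν|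
          ≤ |∫ x, g x ∂μ - ∫ x, p.eval x ∂μ| + |∫ x, p.eval x ∂μ - ∫ x, g x ∂ν| :=
            abs_sub_le _ _ _
        _ ≤ ε + ε := by
            refine add_le_add (hdiff μ ‹_› hμ) ?_
            rw [hpoly p, abs_sub_comm]
            exact hdiff ν ‹_› hν
        _ = 2 * ε := by ring
    have habs : |∫ x, g x ∂μ - ∫ x, g x ∂ν| ≤ 0 := by
      refine le_of_forall_pos_le_add fun ε hε => ?_
      have := main (ε / 2) (half_pos hε)
      linarith
    have := abs_nonpos_iff.mp habs
    linarith [sub_eq_zero.mp this]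
  refine ext_of_forall_lintegral_eq_of_IsFiniteMeasure fun f => ?_
  set g : ℝ →ᵇ ℝ :=
    BoundedContinuousFunction.comp ((↑) : NNReal → ℝ) isometry_subtype_coe.lipschitz f with hg
  have h₁ : (∫⁻ x, f x ∂μ).toReal = (∫⁻ x, f x ∂ν).toReal := by
    rw [BoundedContinuousFunction.toReal_lintegral_coe_eq_integral f μ,
        BoundedContinuousFunction.toReal_lintegral_coe_eq_integral f ν]
    exact key g
  exact (ENNReal.toReal_eq_toReal_iff'
    (BoundedContinuousFunction.lintegral_lt_top_of_nnreal μ f).ne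
    (BoundedContinuousFunction.lintegral_lt_top_of_nnreal ν f).ne).mp h₁

/-- Two probability measures on `[0, ∞)` with the same Laplace transform are equal. -/
lemma ext_of_laplace_aux (μ ν : Measure ℝ) [IsProbabilityMeasure μ] [IsProbabilityMeasure ν]
    (hμ : ∀ᵐ x ∂μ, 0 ≤ x) (hν : ∀ᵐ x ∂ν, 0 ≤ x)
    (h : ∀ l : ℝ, 0 ≤ l → ∫ x, Real.exp (-(l * x)) ∂μ = ∫ x, Real.exp (-(l * x)) ∂ν) :
    μ = ν := by
  set e : ℝ → ℝ := fun x => Real.exp (-x) with he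
  have hecont : Continuous e := Real.continuous_exp.comp continuous_neg
  have heinj : Function.Injective e := Real.exp_injective.comp neg_injective
  have hemb : MeasurableEmbedding e := hecont.measurableEmbedding heinj
  haveI : IsProbabilityMeasure (μ.map e) :=
    Measure.isProbabilityMeasure_map hecont.measurable.aemeasurable
  haveI : IsProbabilityMeasure (ν.map e) :=
    Measure.isProbabilityMeasure_map hecont.measurable.aemeasurable
  have hmem : ∀ (κ : Measure ℝ), (∀ᵐ x ∂κ, 0 ≤ x) →
      (∀ᵐ y ∂(κ.map e), y ∈ Set.Icc (0:ℝ) 1) := by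
    intro κ hκ
    refine (ae_map_iff hecont.measurable.aemeasurable ?_).mpr ?_
    · exact measurableSet_Icc
    filter_upwards [hκ] with x hx
    refine ⟨(Real.exp_pos _).le, ?_⟩
    calc Real.exp (-x) ≤ Real.exp 0 := Real.exp_le_exp.mpr (neg_nonpos.mpr hx)
      _ = 1 := Real.exp_zero
  have hmomint : ∀ (κ : Measure ℝ) (n : ℕ),
      ∫ y, y ^ n ∂(κ.map e) = ∫ x, Real.exp (-((n : ℝ) * x)) ∂κ := by
    intro κ n
    rw [integral_map hecont.measurable.aemeasurable
      ((continuous_pow n).aestronglyMeasurable)]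
    refine integral_congr_ae (Filter.Eventually.of_forall fun x => ?_)
    simp only [he]
    rw [← Real.exp_nat_mul, mul_neg]
  have hmom : ∀ n : ℕ, ∫ y, y ^ n ∂(μ.map e) = ∫ y, y ^ n ∂(ν.map e) := by
    intro n
    rw [hmomint μ n, hmomint ν n]
    exact h n (Nat.cast_nonneg n)
  have hmapeq : μ.map e = ν.map e :=
    ext_of_moments_aux _ _ (hmem μ hμ) (hmem ν hν) hmom
  ext s hs
  have hims : MeasurableSet (e '' s) := hemb.measurableSet_image' hs
  rw [← heinj.preimage_image s,
    ← Measure.map_apply hecont.measurable hims,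
    ← Measure.map_apply hecont.measurable hims, hmapeq]

/-- Random-time version of the self-similarity of stable random walks: if `P` is an
integer valued random time independent of the i.i.d. `α`-stable increments `(Y_n)`,
then `Z_P = P^{1/α} Ỹ` where `Ỹ ∼ ν` is independent of `P`. -/
theorem stable_random_sum_representation
    {Ω : Type*} [MeasureSpace Ω] [IsProbabilityMeasure (ℙ : Measure Ω)]
    (α : ℝ) (hα0 : 0 < α) (hα1 : α < 1)
    (ν : Measure ℝ) [IsProbabilityMeasure ν]
    (Y : ℕ → Ω → ℝ) (P : Ω → ℕ) (Ybar : Ω → ℝ) (Ytil : Ω → ℝ)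
    (hYmeas : ∀ i, Measurable (Y i))
    (hPmeas : Measurable P)
    (hYbarMeas : Measurable Ybar)
    (hYnonneg : ∀ i ω, 0 ≤ Y i ω)
    -- the `Y_i` are i.i.d. with common law `ν`
    (hindep : iIndepFun Y ℙ)
    (hident : ∀ i, Measure.map (Y i) ℙ = ν)
    -- `ν` is the one-sided strictly `α`-stable law
    (hlaplace : ∀ l : ℝ, 0 ≤ l →
      ∫ x, Real.exp (-(l * x)) ∂ν = Real.exp (-(l ^ α)))
    -- `P` is independent of the family `(Y_n)`
    (hPindep : IndepFun P (fun ω => fun i => Y i ω) ℙ)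
    -- `Ybar ∼ ν` is independent of `(Y_n)` and `P`
    (hYbarLaw : Measure.map Ybar ℙ = ν)
    (hYbarIndep : IndepFun Ybar (fun ω => (P ω, fun i => Y i ω)) ℙ)
    -- definition of `Ỹ`
    (hYtil : ∀ ω, Ytil ω =
      if P ω = 0 then Ybar ω
      else ((P ω : ℝ) ^ (1 / α))⁻¹ * ∑ i ∈ Finset.range (P ω), Y i ω) :
    (∀ ω, (∑ i ∈ Finset.range (P ω), Y i ω) = (P ω : ℝ) ^ (1 / α) * Ytil ω) ∧
    Measure.map Ytil ℙ = ν ∧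
    IndepFun Ytil P ℙ := by
  have hαne : α ≠ 0 := ne_of_gt hα0
  -- the rescaled partial sums
  set W : ℕ → Ω → ℝ :=
    fun n ω => (((n : ℝ) ^ (1 / α))⁻¹) * ∑ i ∈ Finset.range n, Y i ω with hW
  have hWmeas : ∀ n, Measurable (W n) := fun n =>
    (Finset.measurable_sum _ fun i _ => hYmeas i).const_mul _
  -- Ytil is measurable
  have hYtilMeas : Measurable Ytil := by
    have hrepr : Ytil = (fun q : Ω × ℕ => if q.2 = 0 then Ybar q.1 else W q.2 q.1)
        ∘ (fun ω => (ω, P ω)) := by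
      funext ω
      simp only [Function.comp_apply]
      rw [hYtil ω, hW]
    rw [hrepr]
    refine Measurable.comp ?_ (measurable_id.prodMk hPmeas)
    refine measurable_from_prod_countable_left fun n => ?_
    by_cases hn : n = 0 <;> simp only [hn, if_true, if_false]
    · exact hYbarMeas
    · exact hWmeas n
  -- ν is supported on the nonnegative reals
  have hνnn : ∀ᵐ x ∂ν, 0 ≤ x := by
    rw [← hident 0, ae_map_iff (hYmeas 0).aemeasurable measurableSet_Ici]
    exact Filter.Eventually.of_forall fun ω => hYnonneg 0 ω
  -- the law of `W n` is `ν` for `n ≠ 0`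
  have hWlaw : ∀ n : ℕ, n ≠ 0 → Measure.map (W n) ℙ = ν := by
    intro n hn
    have hnpos : (0:ℝ) < (n : ℝ) := by exact_mod_cast Nat.pos_of_ne_zero hn
    have hcpos : (0:ℝ) < (n : ℝ) ^ (1 / α) := Real.rpow_pos_of_pos hnpos _
    haveI : IsProbabilityMeasure (Measure.map (W n) ℙ) :=
      Measure.isProbabilityMeasure_map (hWmeas n).aemeasurable
    refine ext_of_laplace_aux _ _ ?_ hνnn ?_
    · rw [ae_map_iff (hWmeas n).aemeasurable measurableSet_Ici]
      exact Filter.Eventually.of_forall fun ω => mul_nonneg (inv_nonneg.mpr hcpos.le)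
        (Finset.sum_nonneg fun i _ => hYnonneg i ω)
    · intro l hl
      rw [hlaplace l hl,
        integral_map (hWmeas n).aemeasurable
          (Continuous.aestronglyMeasurable (by continuity))]
      set m : ℝ := l * (((n:ℝ) ^ (1 / α))⁻¹) with hm
      have hm0 : 0 ≤ m := mul_nonneg hl (inv_nonneg.mpr hcpos.le)
      have hrw : (fun ω => Real.exp (-(l * W n ω)))
          = fun ω => Real.exp ((-m) * (∑ i ∈ Finset.range n, Y i) ω) := by
        funext ω
        rw [hW]
        simp only [Finset.sum_apply]
        congr 1
        ring
      rw [hrw]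
      have hsum : (∫ ω, Real.exp ((-m) * (∑ i ∈ Finset.range n, Y i) ω) ∂ℙ)
          = mgf (∑ i ∈ Finset.range n, Y i) ℙ (-m) := rfl
      rw [hsum, hindep.mgf_sum hYmeas (Finset.range n)]
      have hfac : ∀ i, mgf (Y i) ℙ (-m) = Real.exp (-(m ^ α)) := by
        intro i
        have h1 : mgf (Y i) ℙ (-m) = ∫ x, Real.exp (-(m * x)) ∂ν := by
          rw [← hident i, integral_map (hYmeas i).aemeasurable
            (Continuous.aestronglyMeasurable (by continuity))]
          unfold mgf
          refine integral_congr_ae (Filter.Eventually.of_forall fun ω => ?_)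
          simp only [neg_mul]
        rw [h1, hlaplace m hm0]
      rw [Finset.prod_congr rfl fun i _ => hfac i, Finset.prod_const, Finset.card_range,
        ← Real.exp_nat_mul]
      congr 1
      have hcα : ((n:ℝ) ^ (1 / α)) ^ α = (n : ℝ) := by
        rw [← Real.rpow_mul hnpos.le, one_div, inv_mul_cancel₀ hαne, Real.rpow_one]
      have hmα : m ^ α = l ^ α / (n : ℝ) := by
        rw [hm, Real.mul_rpow hl (inv_nonneg.mpr hcpos.le),
          ← Real.rpow_neg_one ((n:ℝ) ^ (1 / α)),
          ← Real.rpow_mul (le_of_lt hcpos)]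
        rw [show ((n:ℝ) ^ (1 / α)) ^ (-1 * α) = (((n:ℝ) ^ (1 / α)) ^ α)⁻¹ by
          rw [neg_one_mul, Real.rpow_neg (le_of_lt hcpos)]]
        rw [hcα, div_eq_mul_inv]
      rw [hmα]
      field_simp
  -- the key identity: for every measurable `A` and every `n`,
  -- `ℙ(Ytil ∈ A, P = n) = ν A * ℙ(P = n)`
  have key : ∀ A : Set ℝ, MeasurableSet A → ∀ n : ℕ,
      ℙ (Ytil ⁻¹' A ∩ P ⁻¹' {n}) = ν A * ℙ (P ⁻¹' {n}) := by
    intro A hA n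
    by_cases hn : n = 0
    · subst hn
      have hset : Ytil ⁻¹' A ∩ P ⁻¹' {0} = Ybar ⁻¹' A ∩ P ⁻¹' {0} := by
        ext ω
        simp only [Set.mem_inter_iff, Set.mem_preimage, Set.mem_singleton_iff]
        constructor
        · rintro ⟨h1, h2⟩; rw [hYtil ω, if_pos h2] at h1; exact ⟨h1, h2⟩
        · rintro ⟨h1, h2⟩; rw [hYtil ω, if_pos h2]; exact ⟨h1, h2⟩
      have hBP : IndepFun Ybar P ℙ := by
        have := hYbarIndep.comp measurable_id
          (measurable_fst : Measurable (Prod.fst : ℕ × (ℕ → ℝ) → ℕ))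
        exact this
      rw [hset,
        indepFun_iff_measure_inter_preimage_eq_mul.mp hBP A {0} hA (measurableSet_singleton 0),
        ← hYbarLaw, Measure.map_apply hYbarMeas hA]
    · have hset : Ytil ⁻¹' A ∩ P ⁻¹' {n} = W n ⁻¹' A ∩ P ⁻¹' {n} := by
        ext ω
        simp only [Set.mem_inter_iff, Set.mem_preimage, Set.mem_singleton_iff]
        constructor
        · rintro ⟨h1, h2⟩
          rw [hYtil ω, if_neg (by rw [h2]; exact hn)] at h1
          refine ⟨?_, h2⟩
          rw [h2] at h1; exact h1
        · rintro ⟨h1, h2⟩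
          rw [hYtil ω, if_neg (by rw [h2]; exact hn)]
          refine ⟨?_, h2⟩
          rw [h2]; exact h1
      have hWP : IndepFun (W n) P ℙ := by
        have := hPindep.symm.comp
          ((Finset.measurable_sum (Finset.range n)
            (fun i _ => measurable_pi_apply i)).const_mul (((n : ℝ) ^ (1 / α))⁻¹))
          measurable_id
        exact this
      rw [hset,
        indepFun_iff_measure_inter_preimage_eq_mul.mp hWP A {n} hA (measurableSet_singleton n),
        ← hWlaw n hn, Measure.map_apply (hWmeas n) hA]
  -- joint factorization over arbitrary sets of integers
  have joint : ∀ A : Set ℝ, MeasurableSet A → ∀ B : Set ℕ,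
      ℙ (Ytil ⁻¹' A ∩ P ⁻¹' B) = ν A * ℙ (P ⁻¹' B) := by
    intro A hA B
    have hBc : B.Countable := Set.to_countable B
    have hd1 : B.PairwiseDisjoint (fun n => Ytil ⁻¹' A ∩ P ⁻¹' {n}) := by
      intro n _ m _ hnm
      refine Set.disjoint_left.mpr ?_
      rintro ω ⟨-, h1⟩ ⟨-, h2⟩
      simp only [Set.mem_preimage, Set.mem_singleton_iff] at h1 h2
      exact hnm (h1 ▸ h2)
    have hd2 : B.PairwiseDisjoint (fun n => P ⁻¹' {n}) := by
      intro n _ m _ hnm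
      refine Set.disjoint_left.mpr ?_
      rintro ω h1 h2
      simp only [Set.mem_preimage, Set.mem_singleton_iff] at h1 h2
      exact hnm (h1 ▸ h2)
    have hdecomp : Ytil ⁻¹' A ∩ P ⁻¹' B = ⋃ n ∈ B, (Ytil ⁻¹' A ∩ P ⁻¹' {n}) := by
      ext ω
      simp only [Set.mem_inter_iff, Set.mem_preimage, Set.mem_iUnion,
        Set.mem_singleton_iff, exists_prop]
      constructor
      · rintro ⟨h1, h2⟩; exact ⟨P ω, h2, h1, rfl⟩
      · rintro ⟨n, hnB, h1, h2⟩; exact ⟨h1, h2 ▸ hnB⟩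
    have hdecomp' : P ⁻¹' B = ⋃ n ∈ B, P ⁻¹' {n} := by
      ext ω
      simp only [Set.mem_preimage, Set.mem_iUnion, Set.mem_singleton_iff, exists_prop]
      constructor
      · intro h; exact ⟨P ω, h, rfl⟩
      · rintro ⟨n, hnB, h⟩; exact h ▸ hnB
    rw [hdecomp, hdecomp',
      measure_biUnion hBc hd1 (fun n _ =>
        (hYtilMeas hA).inter (hPmeas (measurableSet_singleton n))),
      measure_biUnion hBc hd2 (fun n _ => hPmeas (measurableSet_singleton n)),
      ← ENNReal.tsum_mul_left]
    exact tsum_congr fun n => key A hA n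
  -- the law of Ytil
  have hmap : Measure.map Ytil ℙ = ν := by
    ext A hA
    rw [Measure.map_apply hYtilMeas hA]
    have := joint A hA Set.univ
    simpa [measure_univ] using this
  refine ⟨?_, hmap, ?_⟩
  · intro ω
    rw [hYtil ω]
    by_cases h : P ω = 0
    · rw [if_pos h, h]
      simp [one_div, Real.zero_rpow (inv_ne_zero hαne)]
    · rw [if_neg h]
      have hcpos : (0:ℝ) < ((P ω : ℝ)) ^ (1 / α) :=
        Real.rpow_pos_of_pos (by exact_mod_cast Nat.pos_of_ne_zero h) _
      rw [← mul_assoc, mul_inv_cancel₀ hcpos.ne', one_mul]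
  · rw [indepFun_iff_measure_inter_preimage_eq_mul]
    intro A B hA hB
    rw [joint A hA B, ← Measure.map_apply hYtilMeas hA, hmap]
end

section
/- Let a: ℝ → ℝ be odd, increasing, concave on [0,∞) with a(0) = 0. Then for all x ≥ 0, y ∈ ℝ, and z ≥ 0, |a(x + z) - a(y + z)| ≤ 2·a(2|x - y|). -/
theorem subadd_of_concave (a : ℝ → ℝ)
    (hconc : ConcaveOn ℝ (Set.Ici 0) a) (h0 : a 0 = 0) :
    ∀ u v : ℝ, 0 ≤ u → 0 ≤ v → a (u + v) ≤ a u + a v := by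
  intro u v hu hv
  rcases eq_or_lt_of_le (add_nonneg hu hv) with hc | hc
  · have hu0 : u = 0 := by linarith [hv]
    have hv0 : v = 0 := by linarith
    simp [hu0, hv0, h0]
  · set c := u + v with hcdef
    have h1 : (v / c) • a 0 + (u / c) • a c ≤ a ((v / c) • (0:ℝ) + (u / c) • c) := by
      apply hconc.2 (by simp) (le_of_lt hc) (by positivity) (by positivity)
      field_simp
      linarith
    have h2 : (u / c) • a 0 + (v / c) • a c ≤ a ((u / c) • (0:ℝ) + (v / c) • c) := by
      apply hconc.2 (by simp) (le_of_lt hc) (by positivity) (by positivity)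
      field_simp
      linarith
    have e1 : (v / c) • (0:ℝ) + (u / c) • c = u := by simp only [smul_eq_mul, mul_zero, zero_add]; field_simp
    have e2 : (u / c) • (0:ℝ) + (v / c) • c = v := by simp only [smul_eq_mul, mul_zero, zero_add]; field_simp
    rw [e1, h0] at h1
    rw [e2, h0] at h2
    have : (u / c) • a c + (v / c) • a c ≤ a u + a v := by
      simp only [smul_eq_mul, zero_mul, smul_zero, zero_add] at h1 h2 ⊢
      linarith
    have hsum : (u / c) • a c + (v / c) • a c = a c := by
      simp only [smul_eq_mul]
      field_simp
      ring
    linarith [hsum ▸ this]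

/-- Lemma: for an odd, increasing function `a`, concave on `[0,∞)` with `a 0 = 0`,
one has `|a (x+z) - a (y+z)| ≤ 2 a (2|x - y|)` for all `x ≥ 0`, `y ∈ ℝ`, `z ≥ 0`. -/
theorem abs_a_shift_le (a : ℝ → ℝ)
    (hodd : ∀ x : ℝ, a (-x) = -a x)
    (hmono : Monotone a)
    (hconc : ConcaveOn ℝ (Set.Ici 0) a)
    (h0 : a 0 = 0) :
    ∀ x y z : ℝ, 0 ≤ x → 0 ≤ z →
      |a (x + z) - a (y + z)| ≤ 2 * a (2 * |x - y|) := by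
  intro x y z hx hz
  have sub := subadd_of_concave a hconc h0
  set s := x + z with hs
  set t := y + z with ht
  have hs0 : 0 ≤ s := by positivity
  have hd : |x - y| = |s - t| := by rw [hs, ht]; ring_nf
  set d := |s - t| with hdd
  have hd0 : 0 ≤ d := abs_nonneg _
  have had : 0 ≤ a d := by rw [← h0]; exact hmono hd0
  have ha2d : a d ≤ a (2 * d) := hmono (by linarith)
  have key : |a s - a t| ≤ 2 * a d := by
    rcases le_total t s with hts | hst
    · -- t ≤ s
      have habs : |a s - a t| = a s - a t := abs_of_nonneg (by linarith [hmono hts])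
      have hdeq : d = s - t := abs_of_nonneg (by linarith)
      rcases le_or_gt 0 t with ht0 | ht0
      · -- a s ≤ a (s-t) + a t
        have := sub (s - t) t (by linarith) ht0
        rw [habs, hdeq]
        have : a s ≤ a (s - t) + a t := by
          have e : s - t + t = s := by ring
          rwa [e] at this
        rw [hdeq] at had
        linarith
      · -- t < 0
        have has : a s ≤ a d := hmono (by rw [hdeq]; linarith)
        have hat : -a t ≤ a d := by
          rw [← hodd]
          exact hmono (by rw [hdeq]; linarith)
        rw [habs]; linarith
    · -- s ≤ t, then 0 ≤ s ≤ t
      have habs : |a s - a t| = a t - a s := by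
        rw [abs_sub_comm, abs_of_nonneg (by linarith [hmono hst])]
      have hdeq : d = t - s := by rw [hdd, abs_sub_comm]; exact abs_of_nonneg (by linarith)
      have := sub (t - s) s (by linarith) hs0
      have e : t - s + s = t := by ring
      rw [e] at this
      rw [hdeq] at had
      rw [habs, hdeq]
      linarith
  rw [hd]
  calc |a s - a t| ≤ 2 * a d := key
    _ ≤ 2 * a (2 * d) := by linarith
end
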